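/- Let f be a C¹ diffeomorphism of a closed surface M and p₀, q₀ ∈ M. Writing p_s = f^s(p₀) and q_s = f^s(q₀), for every n ≥ 0 one has [μ_{f^{n+1}}(p₀), μ_{f^{n+1}}(q₀)] ≤ Σ_{s=0}^{n} [ T_{μ_f(p_s)}(θ_f(p_s) μ_{f^{n-s}}(q_{s+1})), T_{μ_f(q_s)}(θ_f(q_s) μ_{f^{n-s}}(q_{s+1})) ], where T_a(z) = (a+z)/(1+ā z) and θ_f(p) = (conj(f_z)/f_z)(p). -/

import Mathlib

/- Statement 6: Let f be a C¹ diffeomorphism of a closed surface M and p₀, q₀ ∈ M. Writing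
p_s = f^s(p₀) and q_s = f^s(q₀), for every n ≥ 0 one has
[μ_{f^{n+1}}(p₀), μ_{f^{n+1}}(q₀)] ≤
  Σ_{s=0}^{n} [ T_{μ_f(p_s)}(θ_f(p_s) μ_{f^{n-s}}(q_{s+1})),
                T_{μ_f(q_s)}(θ_f(q_s) μ_{f^{n-s}}(q_{s+1})) ],
where T_a(z) = (a+z)/(1+ā z) and θ_f(p) = (conj(f_z)/f_z)(p).

The complex dilatation data μ (with `μ n` the complex dilatation of `f^n`) and θ, defined
via the conformal structure induced from the universal cover, are recorded through their
characterizing properties: they take values in the unit disc (resp. circle), `μ 0 = 0`,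
and they satisfy the composition rule μ_{f^{n+1}}(p) = T_{μ_f(p)}(θ_f(p) μ_{f^n}(f(p))). -/

open Metric Set Filter Topology Complex
open scoped Manifold

noncomputable section

/-- The Möbius transformation `T_a(z) = (a + z) / (1 + ā z)` of the unit disc. -/
noncomputable def Tmob (a z : ℂ) : ℂ := (a + z) / (1 + (starRingEnd ℂ) a * z)

/-- The hyperbolic (Poincaré) distance on the unit disc. -/
noncomputable def hypDist (a b : ℂ) : ℝ :=
  Real.log ((1 + ‖(a - b) / (1 - (starRingEnd ℂ) a * b)‖) /
    (1 - ‖(a - b) / (1 - (starRingEnd ℂ) a * b)‖))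

lemma normSq_sub_id (a b : ℂ) :
    Complex.normSq (1 - (starRingEnd ℂ) a * b) - Complex.normSq (a - b)
      = (1 - Complex.normSq a) * (1 - Complex.normSq b) := by
  simp [Complex.normSq_apply, Complex.mul_re, Complex.mul_im]
  ring

lemma normSq_add_id (a b : ℂ) :
    Complex.normSq (1 + (starRingEnd ℂ) a * b) - Complex.normSq (a + b)
      = (1 - Complex.normSq a) * (1 - Complex.normSq b) := by
  simp [Complex.normSq_apply, Complex.mul_re, Complex.mul_im]
  ring

lemma normSq_lt_one {a : ℂ} (ha : ‖a‖ < 1) : Complex.normSq a < 1 := by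
  have := Complex.sq_norm a
  nlinarith [norm_nonneg a]

lemma abs_sub_lt {a b : ℂ} (ha : ‖a‖ < 1) (hb : ‖b‖ < 1) :
    ‖a - b‖ < ‖1 - (starRingEnd ℂ) a * b‖ := by
  have h := normSq_sub_id a b
  have h1 := normSq_lt_one ha
  have h2 := normSq_lt_one hb
  have : Complex.normSq (a - b) < Complex.normSq (1 - (starRingEnd ℂ) a * b) := by nlinarith
  have := Real.sqrt_lt_sqrt (Complex.normSq_nonneg _) this
  rwa [← Complex.norm_def, ← Complex.norm_def] at this

lemma denom_pos {a b : ℂ} (ha : ‖a‖ < 1) (hb : ‖b‖ < 1) :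
    0 < ‖1 - (starRingEnd ℂ) a * b‖ :=
  lt_of_le_of_lt (norm_nonneg _) (abs_sub_lt ha hb)

lemma rho_lt_one {a b : ℂ} (ha : ‖a‖ < 1) (hb : ‖b‖ < 1) :
    ‖(a - b) / (1 - (starRingEnd ℂ) a * b)‖ < 1 := by
  rw [norm_div]
  exact div_lt_one (denom_pos ha hb) |>.mpr (abs_sub_lt ha hb)

lemma tmob_disc {a z : ℂ} (ha : ‖a‖ < 1) (hz : ‖z‖ < 1) :
    ‖Tmob a z‖ < 1 := by
  have h := normSq_add_id a z
  have h1 := normSq_lt_one ha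
  have h2 := normSq_lt_one hz
  have hlt : Complex.normSq (a + z) < Complex.normSq (1 + (starRingEnd ℂ) a * z) := by nlinarith
  have hlt' : ‖a + z‖ < ‖1 + (starRingEnd ℂ) a * z‖ := by
    have := Real.sqrt_lt_sqrt (Complex.normSq_nonneg _) hlt
    rwa [← Complex.norm_def, ← Complex.norm_def] at this
  have hpos : 0 < ‖1 + (starRingEnd ℂ) a * z‖ :=
    lt_of_le_of_lt (norm_nonneg _) hlt'
  rw [Tmob, norm_div]
  exact div_lt_one hpos |>.mpr hlt'

lemma denom_ne {a z : ℂ} (ha : ‖a‖ < 1) (hz : ‖z‖ < 1) :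
    (1 + (starRingEnd ℂ) a * z) ≠ 0 := by
  intro h
  have h1 := normSq_add_id a z
  have := normSq_lt_one ha
  have := normSq_lt_one hz
  rw [h] at h1
  simp at h1
  nlinarith [Complex.normSq_nonneg (a + z)]

lemma hypDist_symm (a b : ℂ) : hypDist a b = hypDist b a := by
  have : ‖(a - b) / (1 - (starRingEnd ℂ) a * b)‖
      = ‖(b - a) / (1 - (starRingEnd ℂ) b * a)‖ := by
    rw [norm_div, norm_div]
    congr 1
    · exact norm_sub_rev a b
    · rw [← Complex.norm_conj (1 - (starRingEnd ℂ) a * b)]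
      congr 1
      simp [mul_comm]
  rw [hypDist, hypDist, this]

lemma hypDist_self (a : ℂ) : hypDist a a = 0 := by
  simp [hypDist]

lemma tmob_invariance {a z w : ℂ} (ha : ‖a‖ < 1) (hz : ‖z‖ < 1)
    (hw : ‖w‖ < 1) : hypDist (Tmob a z) (Tmob a w) = hypDist z w := by
  have hD1 : (1 + (starRingEnd ℂ) a * z) ≠ 0 := denom_ne ha hz
  have hD2 : (1 + (starRingEnd ℂ) a * w) ≠ 0 := denom_ne ha hw
  -- numerator identity
  have hnum : (Tmob a z - Tmob a w) * ((1 + (starRingEnd ℂ) a * z) * (1 + (starRingEnd ℂ) a * w))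
      = (1 - (starRingEnd ℂ) a * a) * (z - w) := by
    rw [Tmob, Tmob, div_sub_div _ _ hD1 hD2, div_mul_eq_mul_div, div_eq_iff (mul_ne_zero hD1 hD2)]
    ring
  -- denominator identity
  have hden : (1 - (starRingEnd ℂ) (Tmob a z) * Tmob a w) *
        ((starRingEnd ℂ) (1 + (starRingEnd ℂ) a * z) * (1 + (starRingEnd ℂ) a * w))
      = (1 - (starRingEnd ℂ) a * a) * (1 - (starRingEnd ℂ) z * w) := by
    have hD1c : (1 + a * (starRingEnd ℂ) z) ≠ 0 := by
      intro h
      apply hD1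
      have := congrArg (starRingEnd ℂ) h
      simpa using this
    simp only [Tmob, map_div₀, map_add, map_mul, map_one, Complex.conj_conj]
    rw [div_mul_div_comm, one_sub_div (mul_ne_zero hD1c hD2), div_mul_eq_mul_div,
      div_eq_iff (mul_ne_zero hD1c hD2)]
    ring
  -- take absolute values
  have hk : ‖1 - (starRingEnd ℂ) a * a‖ ≠ 0 := by
    have : ‖(starRingEnd ℂ) a * a‖ < 1 := by
      rw [norm_mul, Complex.norm_conj]; nlinarith [norm_nonneg a]
    intro h
    rw [norm_eq_zero, sub_eq_zero] at h
    rw [← h] at this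
    simp at this
  have habsnum := congrArg (‖·‖) hnum
  have habsden := congrArg (‖·‖) hden
  simp only [norm_mul] at habsnum habsden
  rw [Complex.norm_conj] at habsden
  -- ρ equality
  have hTz := tmob_disc ha hz
  have hTw := tmob_disc ha hw
  have hB : 0 < ‖1 - (starRingEnd ℂ) (Tmob a z) * Tmob a w‖ := denom_pos hTz hTw
  have hW : 0 < ‖1 - (starRingEnd ℂ) z * w‖ := denom_pos hz hw
  have hd1 : 0 < ‖1 + (starRingEnd ℂ) a * z‖ := by
    simpa using norm_pos_iff.mpr hD1
  have hd2 : 0 < ‖1 + (starRingEnd ℂ) a * w‖ := by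
    simpa using norm_pos_iff.mpr hD2
  have hrho : ‖(Tmob a z - Tmob a w) / (1 - (starRingEnd ℂ) (Tmob a z) * Tmob a w)‖
      = ‖(z - w) / (1 - (starRingEnd ℂ) z * w)‖ := by
    rw [norm_div, norm_div]
    rw [div_eq_div_iff (ne_of_gt hB) (ne_of_gt hW)]
    have hK : 0 < ‖1 - (starRingEnd ℂ) a * a‖ := lt_of_le_of_ne (norm_nonneg _) (Ne.symm hk)
    nlinarith [norm_nonneg (Tmob a z - Tmob a w), norm_nonneg (z - w),
      mul_pos hd1 hd2]
  rw [hypDist, hypDist, hrho]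

lemma rot_invariance {u z w : ℂ} (hu : ‖u‖ = 1) :
    hypDist (u * z) (u * w) = hypDist z w := by
  have hc : (starRingEnd ℂ) u * u = 1 := by
    rw [mul_comm, Complex.mul_conj]
    norm_cast
    rw [← Complex.sq_norm, hu]; norm_num
  have h1 : (u * z - u * w) = u * (z - w) := by ring
  have h2 : (1 - (starRingEnd ℂ) (u * z) * (u * w)) = 1 - (starRingEnd ℂ) z * w := by
    rw [map_mul]
    have : (starRingEnd ℂ) u * (starRingEnd ℂ) z * (u * w)
        = ((starRingEnd ℂ) u * u) * ((starRingEnd ℂ) z * w) := by ring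
    rw [this, hc, one_mul]
  rw [hypDist, hypDist, h1, h2, norm_div, norm_mul, hu, one_mul, ← norm_div]

lemma key_ineq {x y : ℂ} (hx : ‖x‖ < 1) (hy : ‖y‖ < 1) :
    ‖x - y‖ * (1 + ‖x‖ * ‖y‖)
      ≤ (‖x‖ + ‖y‖) * ‖1 - (starRingEnd ℂ) x * y‖ := by
  set r := ‖x‖ with hr
  set s := ‖y‖ with hs
  have hr0 : 0 ≤ r := norm_nonneg x
  have hs0 : 0 ≤ s := norm_nonneg y
  set t := ((starRingEnd ℂ) x * y).re with ht
  have hP : Complex.normSq (x - y) = r ^ 2 + s ^ 2 - 2 * t := by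
    rw [hr, hs, Complex.sq_norm, Complex.sq_norm]
    simp [Complex.normSq_apply, Complex.mul_re, ht]
    ring
  have hQ : Complex.normSq (1 - (starRingEnd ℂ) x * y) = 1 + r ^ 2 * s ^ 2 - 2 * t := by
    rw [hr, hs, Complex.sq_norm, Complex.sq_norm]
    simp [Complex.normSq_apply, Complex.mul_re, Complex.mul_im, ht]
    ring
  have htlb : -(r * s) ≤ t := by
    have h1 : |((starRingEnd ℂ) x * y).re| ≤ ‖(starRingEnd ℂ) x * y‖ :=
      Complex.abs_re_le_norm _
    rw [norm_mul, Complex.norm_conj] at h1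
    have := neg_abs_le (((starRingEnd ℂ) x * y).re)
    rw [← hr, ← hs] at h1
    nlinarith [abs_nonneg (((starRingEnd ℂ) x * y).re)]
  -- squared inequality
  have hsq : (‖x - y‖) ^ 2 * (1 + r * s) ^ 2
      ≤ (r + s) ^ 2 * (‖1 - (starRingEnd ℂ) x * y‖) ^ 2 := by
    rw [Complex.sq_norm, Complex.sq_norm, hP, hQ]
    have hid : (r + s) ^ 2 * (1 + r ^ 2 * s ^ 2 - 2 * t)
        - (r ^ 2 + s ^ 2 - 2 * t) * (1 + r * s) ^ 2
        = 2 * (t + r * s) * (1 - r ^ 2) * (1 - s ^ 2) := by ring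
    nlinarith [mul_nonneg (mul_nonneg (by linarith : (0:ℝ) ≤ t + r * s)
      (by nlinarith : (0:ℝ) ≤ 1 - r ^ 2)) (by nlinarith : (0:ℝ) ≤ 1 - s ^ 2)]
  have h1 : 0 ≤ ‖x - y‖ * (1 + r * s) :=
    mul_nonneg (norm_nonneg _) (by nlinarith)
  have h2 : 0 ≤ (r + s) * ‖1 - (starRingEnd ℂ) x * y‖ :=
    mul_nonneg (by linarith) (norm_nonneg _)
  nlinarith [hsq]

lemma hypDist_triangle {a b c : ℂ} (ha : ‖a‖ < 1) (hb : ‖b‖ < 1)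
    (hc : ‖c‖ < 1) : hypDist a c ≤ hypDist a b + hypDist b c := by
  have hnb : ‖-b‖ < 1 := by simpa using hb
  set x := Tmob (-b) a with hx
  set y := Tmob (-b) c with hy
  have hxd : ‖x‖ < 1 := tmob_disc hnb ha
  have hyd : ‖y‖ < 1 := tmob_disc hnb hc
  have hb0 : Tmob (-b) b = 0 := by
    rw [Tmob]
    simp
  have e1 : hypDist a c = hypDist x y := (tmob_invariance hnb ha hc).symm
  have e2 : hypDist a b = hypDist x 0 := by
    rw [← hb0]; exact (tmob_invariance hnb ha hb).symm
  have e3 : hypDist b c = hypDist 0 y := by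
    rw [← hb0]; exact (tmob_invariance hnb hb hc).symm
  rw [e1, e2, e3]
  -- reduce to explicit formulas
  set r := ‖x‖ with hr
  set s := ‖y‖ with hs
  have hr0 : 0 ≤ r := norm_nonneg x
  have hs0 : 0 ≤ s := norm_nonneg y
  have hx0 : hypDist x 0 = Real.log ((1 + r) / (1 - r)) := by
    rw [hypDist]
    simp [hr]
  have h0y : hypDist 0 y = Real.log ((1 + s) / (1 - s)) := by
    rw [hypDist]
    simp [hs]
  set ρ := ‖(x - y) / (1 - (starRingEnd ℂ) x * y)‖ with hρ
  have hρ0 : 0 ≤ ρ := norm_nonneg _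
  have hρ1 : ρ < 1 := rho_lt_one hxd hyd
  have hWpos : 0 < ‖1 - (starRingEnd ℂ) x * y‖ := denom_pos hxd hyd
  have hkey : ρ * (1 + r * s) ≤ r + s := by
    have := key_ineq hxd hyd
    rw [hρ, norm_div]
    rw [div_mul_eq_mul_div, div_le_iff₀ hWpos]
    nlinarith
  rw [hx0, h0y, hypDist, ← hρ]
  rw [← Real.log_mul (ne_of_gt (div_pos (by linarith) (by linarith)))
    (ne_of_gt (div_pos (by linarith) (by linarith)))]
  apply Real.log_le_log (div_pos (by linarith) (by linarith))
  rw [div_mul_div_comm, div_le_div_iff₀ (by linarith) (by nlinarith)]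
  nlinarith

lemma hypDist_chain (b : ℕ → ℂ) (hb : ∀ s, ‖b s‖ < 1) (m : ℕ) :
    hypDist (b 0) (b m) ≤ ∑ s ∈ Finset.range m, hypDist (b s) (b (s + 1)) := by
  induction m with
  | zero => simp [hypDist_self]
  | succ m ih =>
      rw [Finset.sum_range_succ]
      calc hypDist (b 0) (b (m + 1))
          ≤ hypDist (b 0) (b m) + hypDist (b m) (b (m + 1)) :=
            hypDist_triangle (hb 0) (hb m) (hb (m + 1))
        _ ≤ _ := by linarith

theorem hypDist_mu_iterates_le
    {M : Type*} [MetricSpace M] [CompactSpace M] [ConnectedSpace M]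
    [ChartedSpace (EuclideanSpace ℝ (Fin 2)) M] [IsManifold (𝓡 2) (⊤ : ℕ∞) M]
    (f : M ≃ₜ M)
    (hf : ContMDiff (𝓡 2) (𝓡 2) 1 ⇑f) (hf' : ContMDiff (𝓡 2) (𝓡 2) 1 ⇑f.symm)
    -- μ n is the complex dilatation of fⁿ, θ is θ_f
    (μ : ℕ → M → ℂ) (hμ : ∀ n p, ‖μ n p‖ < 1) (hμ0 : ∀ p, μ 0 p = 0)
    (θ : M → ℂ) (hθ : ∀ p, ‖θ p‖ = 1)
    (hcomp : ∀ n p, μ (n + 1) p = Tmob (μ 1 p) (θ p * μ n (f p)))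
    (p₀ q₀ : M) (n : ℕ) :
    hypDist (μ (n + 1) p₀) (μ (n + 1) q₀) ≤
      ∑ s ∈ Finset.range (n + 1),
        hypDist
          (Tmob (μ 1 ((⇑f)^[s] p₀)) (θ ((⇑f)^[s] p₀) * μ (n - s) ((⇑f)^[s + 1] q₀)))
          (Tmob (μ 1 ((⇑f)^[s] q₀)) (θ ((⇑f)^[s] q₀) * μ (n - s) ((⇑f)^[s + 1] q₀))) := by
  classical
  set Φ : M → ℂ → ℂ := fun x z => Tmob (μ 1 x) (θ x * z) with hΦdef
  have hΦdisc : ∀ (x : M) (z : ℂ), ‖z‖ < 1 → ‖Φ x z‖ < 1 := by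
    intro x z hz
    apply tmob_disc (hμ 1 x)
    rw [norm_mul, hθ, one_mul]; exact hz
  have hΦiso : ∀ (x : M) (z w : ℂ), ‖z‖ < 1 → ‖w‖ < 1 →
      hypDist (Φ x z) (Φ x w) = hypDist z w := by
    intro x z w hz hw
    have h1 : ‖θ x * z‖ < 1 := by rw [norm_mul, hθ, one_mul]; exact hz
    have h2 : ‖θ x * w‖ < 1 := by rw [norm_mul, hθ, one_mul]; exact hw
    rw [hΦdef]
    simp only
    rw [tmob_invariance (hμ 1 x) h1 h2, rot_invariance (hθ x)]
  -- the partial composition maps along the p-orbit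
  set C : ℕ → ℂ → ℂ := fun s => Nat.rec id (fun t ih => fun z => ih (Φ ((⇑f)^[t] p₀) z)) s
    with hCdef
  have hC0 : ∀ z, C 0 z = z := fun _ => rfl
  have hCsucc : ∀ s z, C (s + 1) z = C s (Φ ((⇑f)^[s] p₀) z) := fun _ _ => rfl
  have hCdisc : ∀ s z, ‖z‖ < 1 → ‖C s z‖ < 1 := by
    intro s
    induction s with
    | zero => intro z hz; rw [hC0]; exact hz
    | succ s ih => intro z hz; rw [hCsucc]; exact ih _ (hΦdisc _ _ hz)
  have hCiso : ∀ s z w, ‖z‖ < 1 → ‖w‖ < 1 →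
      hypDist (C s z) (C s w) = hypDist z w := by
    intro s
    induction s with
    | zero => intro z w _ _; rw [hC0, hC0]
    | succ s ih =>
        intro z w hz hw
        rw [hCsucc, hCsucc, ih _ _ (hΦdisc _ _ hz) (hΦdisc _ _ hw), hΦiso _ _ _ hz hw]
  -- unrolling the composition rule
  have hunroll : ∀ (m : ℕ) (x : M) (t : ℕ),
      μ (m + 1) ((⇑f)^[t] x) = Φ ((⇑f)^[t] x) (μ m ((⇑f)^[t + 1] x)) := by
    intro m x t
    rw [hcomp m ((⇑f)^[t] x), ← Function.iterate_succ_apply' (⇑f) t x]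
  have hA : ∀ s, s ≤ n + 1 → μ (n + 1) p₀ = C s (μ (n + 1 - s) ((⇑f)^[s] p₀)) := by
    intro s
    induction s with
    | zero => intro _; rw [hC0]; rfl
    | succ s ih =>
        intro hs
        have hs' : s ≤ n + 1 := Nat.le_of_succ_le hs
        have hsn : s ≤ n := Nat.lt_succ_iff.mp hs
        rw [ih hs', hCsucc]
        congr 1
        have h1 : n + 1 - s = (n - s) + 1 := by omega
        have h2 : n + 1 - (s + 1) = n - s := by omega
        rw [h1, h2, hunroll]
  set B : ℕ → ℂ := fun s => C s (μ (n + 1 - s) ((⇑f)^[s] q₀)) with hBdef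
  have hBdisc : ∀ s, ‖B s‖ < 1 := fun s => hCdisc s _ (hμ _ _)
  have hB0 : B 0 = μ (n + 1) q₀ := by rw [hBdef]; simp only; rw [hC0]; rfl
  have hBtop : B (n + 1) = μ (n + 1) p₀ := by
    have h1 : B (n + 1) = C (n + 1) 0 := by
      rw [hBdef]; simp only
      rw [Nat.sub_self, hμ0]
    have h2 : μ (n + 1) p₀ = C (n + 1) (μ 0 ((⇑f)^[n + 1] p₀)) := by
      have := hA (n + 1) le_rfl
      rwa [Nat.sub_self] at this
    rw [h1, h2, hμ0]
  have hstep : ∀ s, s ∈ Finset.range (n + 1) →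
      hypDist (B s) (B (s + 1)) =
        hypDist
          (Tmob (μ 1 ((⇑f)^[s] p₀)) (θ ((⇑f)^[s] p₀) * μ (n - s) ((⇑f)^[s + 1] q₀)))
          (Tmob (μ 1 ((⇑f)^[s] q₀)) (θ ((⇑f)^[s] q₀) * μ (n - s) ((⇑f)^[s + 1] q₀))) := by
    intro s hs
    rw [Finset.mem_range] at hs
    have hsn : s ≤ n := Nat.lt_succ_iff.mp hs
    have h1 : n + 1 - s = (n - s) + 1 := by omega
    have h2 : n + 1 - (s + 1) = n - s := by omega
    set v : ℂ := μ (n - s) ((⇑f)^[s + 1] q₀) with hv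
    have hvd : ‖v‖ < 1 := hμ _ _
    have hBs : B s = C s (Φ ((⇑f)^[s] q₀) v) := by
      rw [hBdef]; simp only
      congr 1
      rw [h1, hunroll]
    have hBs1 : B (s + 1) = C s (Φ ((⇑f)^[s] p₀) v) := by
      rw [hBdef]; simp only
      rw [hCsucc, h2]
    rw [hBs, hBs1, hCiso s _ _ (hΦdisc _ _ hvd) (hΦdisc _ _ hvd),
      hypDist_symm]
  calc hypDist (μ (n + 1) p₀) (μ (n + 1) q₀)
      = hypDist (B 0) (B (n + 1)) := by rw [hB0, hBtop, hypDist_symm]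
    _ ≤ ∑ s ∈ Finset.range (n + 1), hypDist (B s) (B (s + 1)) :=
        hypDist_chain B hBdisc (n + 1)
    _ = _ := Finset.sum_congr rfl hstep
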